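/- (Lower Taylor bound, inequality (4.15).) For every b > 0 and every x ≥ 1/b one has 1/(3x³) − b/(2x²) ≥ −b³/6 + (b⁵/2)·(x − 1/b)² − (4b⁶/3)·(x − 1/b)³. -/
import Mathlib

/-- (Lower Taylor bound, inequality (4.15).) For every `b > 0` and every `x ≥ 1/b` one has
`1/(3x³) − b/(2x²) ≥ −b³/6 + (b⁵/2)·(x − 1/b)² − (4b⁶/3)·(x − 1/b)³`. -/
theorem statement9 (b x : ℝ) (hb : 0 < b) (hx : 1 / b ≤ x) :
    1 / (3 * x ^ 3) - b / (2 * x ^ 2) ≥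
      -b ^ 3 / 6 + b ^ 5 / 2 * (x - 1 / b) ^ 2 - 4 * b ^ 6 / 3 * (x - 1 / b) ^ 3 := by
  have hx0 : 0 < x := lt_of_lt_of_le (by positivity) hx
  have h1 : 1 ≤ b * x := by
    rw [div_le_iff₀ hb] at hx; linarith
  rw [ge_iff_le, ← sub_nonneg]
  have key : 1 / (3 * x ^ 3) - b / (2 * x ^ 2) -
      (-b ^ 3 / 6 + b ^ 5 / 2 * (x - 1 / b) ^ 2 - 4 * b ^ 6 / 3 * (x - 1 / b) ^ 3) =
      (15 * (b * x - 1) ^ 4 + 21 * (b * x - 1) ^ 5 + 8 * (b * x - 1) ^ 6) / (6 * x ^ 3) := by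
    field_simp
    ring
  rw [key]
  have hs : 0 ≤ b * x - 1 := by linarith
  positivity
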